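/- arXiv:2003.10585 — 2 statements merged into one kernel-verified Lean document; each statement's English description precedes it below -/
import Mathlib

section
/- Let W, w, C be as above, and suppose the series x_0 = Σ_{k=0}^∞ W^k w u_{-k} converges. If s_j := Σ_{k=0}^∞ φ_j^{(k)} u_{-k} converges for each j, where the φ_j^{(k)} are the Cayley–Hamilton expansion coefficients of W^k in the basis I, W, ..., W^{n-1}, then x_0 = C s, where s = (s_0, ..., s_{n-1}). -/
open Matrix Finset

/-- the converged state decouples as `x₀ = C s`, where `C` is the
controllability matrix and `s` the network encoded input. -/
theorem state_eq_controllability_mul_encoded_input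
    (n : ℕ) (W : Matrix (Fin n) (Fin n) ℝ) (w : Fin n → ℝ) (u : ℕ → ℝ)
    (φ : ℕ → ℕ → ℝ)
    (hφ : ∀ k : ℕ, W ^ k = ∑ j ∈ Finset.range n, φ k j • W ^ j)
    (x₀ : Fin n → ℝ)
    (hx : HasSum (fun k : ℕ => u k • (W ^ k).mulVec w) x₀)
    (s : Fin n → ℝ)
    (hs : ∀ j : Fin n, HasSum (fun k : ℕ => φ k (j : ℕ) * u k) (s j))
    (C : Matrix (Fin n) (Fin n) ℝ)
    (hC : C = Matrix.of fun i j : Fin n => ((W ^ (j : ℕ)).mulVec w) i) :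
    x₀ = C.mulVec s := by
  have key : ∀ k : ℕ, u k • (W ^ k).mulVec w
      = ∑ j : Fin n, (φ k (j : ℕ) * u k) • (W ^ (j : ℕ)).mulVec w := by
    intro k
    conv_lhs => rw [hφ k]
    rw [← Fin.sum_univ_eq_sum_range (fun j => φ k j • W ^ j)]
    funext i
    simp [Matrix.mulVec, dotProduct, Finset.mul_sum, Finset.sum_mul,
      Finset.smul_sum, Matrix.sum_apply, Matrix.smul_apply, mul_comm, mul_left_comm]
    rw [Finset.sum_comm]; apply Finset.sum_congr rfl; intros; apply Finset.sum_congr rfl; intros; ring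
  have h2 : HasSum (fun k : ℕ => u k • (W ^ k).mulVec w)
      (∑ j : Fin n, s j • (W ^ (j : ℕ)).mulVec w) := by
    have := hasSum_sum (s := (Finset.univ : Finset (Fin n)))
      (f := fun (j : Fin n) (k : ℕ) => (φ k (j : ℕ) * u k) • (W ^ (j : ℕ)).mulVec w)
      (a := fun j => s j • (W ^ (j : ℕ)).mulVec w)
      (fun j _ => (hs j).smul_const _)
    simpa [← key] using this
  have hCs : C.mulVec s = ∑ j : Fin n, s j • (W ^ (j : ℕ)).mulVec w := by
    funext i
    simp [hC, Matrix.mulVec, dotProduct, mul_comm, Finset.sum_apply]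
  rw [hCs]
  exact hx.unique h2
end

section
/- For the scaled cyclic reservoir W = ρ W_c with 0 < ρ < 1, bounded input u, and w ∈ ℝ^n, the state at time 0 satisfies x_0 = Σ_{j=0}^{n-1} w^{(j)} · s̃_j, where w^{(j)} = W_c^j w is the j-times cyclically permuted input weight vector and s̃_j = Σ_{p=0}^∞ ρ^{j+pn} u_{-(j+pn)}. -/
open Matrix Finset

private lemma cyc_pow (n : ℕ) (hn : 0 < n) (Wc : Matrix (Fin n) (Fin n) ℝ)
    (hWc : Wc = Matrix.of fun i j : Fin n =>
      if ((i : ℕ) + 1) % n = (j : ℕ) then (1 : ℝ) else 0) (k : ℕ) :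
    Wc ^ k = Matrix.of fun i j : Fin n =>
      if ((i : ℕ) + k) % n = (j : ℕ) then (1 : ℝ) else 0 := by
  induction k with
  | zero =>
    ext i j
    simp [Matrix.one_apply, Nat.mod_eq_of_lt i.isLt, Fin.ext_iff]
  | succ k ih =>
    rw [pow_succ, ih, hWc]
    ext i j
    simp only [Matrix.mul_apply, Matrix.of_apply]
    rw [Finset.sum_eq_single (⟨((i : ℕ) + k) % n, Nat.mod_lt _ hn⟩ : Fin n)]
    · simp only [if_pos rfl, one_mul]
      simp [Nat.mod_add_mod, ← Nat.add_assoc]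
    · intro m _ hm
      rw [if_neg, zero_mul]
      intro h
      exact hm (Fin.ext h.symm)
    · intro h
      exact absurd (Finset.mem_univ _) h

/-- for the scaled cyclic reservoir, the state decomposes as
`x₀ = ∑_{j=0}^{n-1} s̃_j · W_c^j w` with `s̃_j = ∑_{p=0}^∞ ρ^{j+pn} u_{-(j+pn)}`. -/
theorem cyclic_state_decomposition
    (n : ℕ) (hn : 0 < n) (Wc : Matrix (Fin n) (Fin n) ℝ)
    (hWc : Wc = Matrix.of fun i j : Fin n =>
      if ((i : ℕ) + 1) % n = (j : ℕ) then (1 : ℝ) else 0)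
    (ρ : ℝ) (hρ0 : 0 < ρ) (hρ1 : ρ < 1)
    (u : ℕ → ℝ) (hu : ∃ U : ℝ, 0 < U ∧ ∀ k, |u k| ≤ U)
    (w : Fin n → ℝ) :
    ∑' k : ℕ, u k • ((ρ • Wc) ^ k).mulVec w
      = ∑ j ∈ Finset.range n,
          (∑' p : ℕ, ρ ^ (j + p * n) * u (j + p * n)) • (Wc ^ j).mulVec w := by
  haveI : NeZero n := ⟨hn.ne'⟩
  obtain ⟨U, hU, hUb⟩ := hu
  have hWcn : Wc ^ n = 1 := by
    rw [cyc_pow n hn Wc hWc n]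
    ext i j
    simp [Matrix.one_apply, Nat.add_mod_right, Nat.mod_eq_of_lt i.isLt, Fin.ext_iff]
  set f : ℕ → (Fin n → ℝ) := fun k => u k • ((ρ • Wc) ^ k).mulVec w with hf
  -- coordinate formula for mulVec
  have hmv : ∀ k : ℕ, ‖(Wc ^ k).mulVec w‖ ≤ ‖w‖ := by
    intro k
    rw [cyc_pow n hn Wc hWc k]
    rw [pi_norm_le_iff_of_nonneg (norm_nonneg w)]
    intro i
    have : (Matrix.of fun i j : Fin n =>
        if ((i : ℕ) + k) % n = (j : ℕ) then (1 : ℝ) else 0).mulVec w i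
        = w ⟨((i : ℕ) + k) % n, Nat.mod_lt _ hn⟩ := by
      simp only [Matrix.mulVec, Matrix.of_apply, dotProduct]
      rw [Finset.sum_eq_single (⟨((i : ℕ) + k) % n, Nat.mod_lt _ hn⟩ : Fin n)]
      · simp
      · intro m _ hm
        rw [if_neg, zero_mul]
        intro h; exact hm (Fin.ext h.symm)
      · intro h; exact absurd (Finset.mem_univ _) h
    rw [this]
    exact norm_le_pi_norm w _
  have hρk : ∀ k : ℕ, (0:ℝ) ≤ ρ ^ k := fun k => pow_nonneg hρ0.le k
  have hbound : ∀ k, ‖f k‖ ≤ (U * ‖w‖) * ρ ^ k := by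
    intro k
    have h1 : ((ρ • Wc) ^ k).mulVec w = ρ ^ k • (Wc ^ k).mulVec w := by
      rw [smul_pow, Matrix.smul_mulVec]
    rw [hf]
    simp only [h1, norm_smul, Real.norm_eq_abs, abs_of_nonneg (hρk k)]
    calc |u k| * (ρ ^ k * ‖(Wc ^ k).mulVec w‖)
        ≤ U * (ρ ^ k * ‖w‖) := by
          apply mul_le_mul (hUb k) (mul_le_mul_of_nonneg_left (hmv k) (hρk k))
            (by positivity) hU.le
      _ = (U * ‖w‖) * ρ ^ k := by ring
  have hgeo : Summable fun k : ℕ => (U * ‖w‖) * ρ ^ k :=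
    (summable_geometric_of_lt_one hρ0.le hρ1).mul_left _
  have hsum : Summable f := Summable.of_norm_bounded hgeo hbound
  have hterm : ∀ (j : Fin n) (p : ℕ),
      f (p * n + (j : ℕ)) = (ρ ^ ((j : ℕ) + p * n) * u ((j : ℕ) + p * n)) •
        (Wc ^ (j : ℕ)).mulVec w := by
    intro j p
    have hk : p * n + (j : ℕ) = (j : ℕ) + p * n := Nat.add_comm _ _
    have h1 : Wc ^ (p * n + (j : ℕ)) = Wc ^ (j : ℕ) := by
      rw [pow_add, mul_comm p n, pow_mul, hWcn, one_pow, one_mul]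
    rw [hf]
    simp only [smul_pow, h1, Matrix.smul_mulVec, smul_smul]
    rw [hk, mul_comm (u _) _]
  -- reindex the tsum
  have e1 : (∑' k : ℕ, f k) = ∑' pj : ℕ × Fin n, f (pj.1 * n + (pj.2 : ℕ)) := by
    rw [← Equiv.tsum_eq (Nat.divModEquiv n).symm f]
    rfl
  have hsum2 : Summable fun pj : ℕ × Fin n => f (pj.1 * n + (pj.2 : ℕ)) := by
    have := ((Nat.divModEquiv n).symm.summable_iff (f := f)).mpr hsum
    exact this
  have e2 : (∑' pj : ℕ × Fin n, f (pj.1 * n + (pj.2 : ℕ)))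
      = ∑' jp : Fin n × ℕ, f (jp.2 * n + (jp.1 : ℕ)) := by
    rw [← Equiv.tsum_eq (Equiv.prodComm (Fin n) ℕ)
      (fun pj : ℕ × Fin n => f (pj.1 * n + (pj.2 : ℕ)))]
    rfl
  have hsum3 : Summable fun jp : Fin n × ℕ => f (jp.2 * n + (jp.1 : ℕ)) := by
    have := ((Equiv.prodComm (Fin n) ℕ).summable_iff
      (f := fun pj : ℕ × Fin n => f (pj.1 * n + (pj.2 : ℕ)))).mpr hsum2
    exact this
  have hinner : ∀ j : Fin n, Summable fun p : ℕ => f (p * n + (j : ℕ)) := by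
    intro j
    apply hsum.comp_injective
    intro a b h
    simp only at h
    exact Nat.eq_of_mul_eq_mul_right hn (Nat.add_right_cancel h)
  rw [e1, e2, Summable.tsum_prod' hsum3 hinner, tsum_fintype]
  rw [← Fin.sum_univ_eq_sum_range (fun j =>
    (∑' p : ℕ, ρ ^ (j + p * n) * u (j + p * n)) • (Wc ^ j).mulVec w)]
  apply Finset.sum_congr rfl
  intro j _
  have hρn : ρ ^ n < 1 := pow_lt_one₀ hρ0.le hρ1 hn.ne'
  have hscal : Summable fun p : ℕ => ρ ^ ((j : ℕ) + p * n) * u ((j : ℕ) + p * n) := by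
    apply Summable.of_norm_bounded
      (((summable_geometric_of_lt_one (pow_nonneg hρ0.le n) hρn).mul_left (U * ρ ^ (j : ℕ))))
    intro p
    have hsplit : ρ ^ ((j : ℕ) + p * n) = ρ ^ (j : ℕ) * (ρ ^ n) ^ p := by
      rw [pow_add, mul_comm p n, pow_mul]
    rw [Real.norm_eq_abs, abs_mul, hsplit, abs_of_nonneg (by positivity : (0:ℝ) ≤ ρ ^ (j:ℕ) * (ρ ^ n) ^ p)]
    calc ρ ^ (j : ℕ) * (ρ ^ n) ^ p * |u ((j : ℕ) + p * n)|
        ≤ ρ ^ (j : ℕ) * (ρ ^ n) ^ p * U := by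
          apply mul_le_mul_of_nonneg_left (hUb _) (by positivity)
      _ = U * ρ ^ (j : ℕ) * (ρ ^ n) ^ p := by ring
  calc (∑' p : ℕ, f (p * n + (j : ℕ)))
      = ∑' p : ℕ, (ρ ^ ((j : ℕ) + p * n) * u ((j : ℕ) + p * n)) • (Wc ^ (j : ℕ)).mulVec w := by
        exact tsum_congr fun p => hterm j p
    _ = (∑' p : ℕ, ρ ^ ((j : ℕ) + p * n) * u ((j : ℕ) + p * n)) • (Wc ^ (j : ℕ)).mulVec w :=
        Summable.tsum_smul_const hscal _
end
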